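/- The following hold: (i) ∫ 1/(d₊−x) dμ_MP(x) = r₁/(√r₂·(√r₁+√r₂)); (ii) with α = (r₁−r₂)/(2r₂) and s = r₁/(√r₂·(√r₁+√r₂)), one has d₊·s² + 2α·s = (r₁/r₂)^{3/2}; consequently B_c := √(d₊·s² + 2α·s) = (r₁/r₂)^{3/4}, and β_c := (√r₂/r₁)·B_c = (r₁r₂)^{−1/4}. -/

import Mathlib

open MeasureTheory

/-- The Marchenko–Pastur distribution with edges `d₋ < d₊`: the measure on `ℝ` with density
`2√((d₊−x)(x−d₋)) / (π(√d₊−√d₋)²x)` on `(d₋, d₊)` and zero elsewhere. -/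
noncomputable def mpMeasure (dm dp : ℝ) : Measure ℝ :=
  volume.withDensity (fun x => ENNReal.ofReal
    (if x ∈ Set.Ioo dm dp then
      2 * Real.sqrt ((dp - x) * (x - dm)) / (Real.pi * (Real.sqrt dp - Real.sqrt dm) ^ 2 * x)
    else 0))

open Real Set

private lemma one_div_sqrt_eq' (y : ℝ) : 1 / Real.sqrt y = y ^ (-(1/2) : ℝ) := by
  rcases lt_trichotomy y 0 with h | h | h
  · rw [Real.sqrt_eq_zero'.2 h.le, Real.rpow_def_of_neg h]
    norm_num
    rw [show ((1/2) * Real.pi = Real.pi/2) by ring, Real.cos_pi_div_two]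
  · subst h; simp [Real.zero_rpow]
  · rw [Real.rpow_neg h.le, Real.sqrt_eq_rpow, one_div]

private lemma sqrtInt' (a b : ℝ) :
    IntervalIntegrable (fun x => 1 / Real.sqrt (x - a)) volume a b ∧
    IntervalIntegrable (fun x => 1 / Real.sqrt (b - x)) volume a b := by
  have base : IntervalIntegrable (fun x : ℝ => x ^ (-(1/2) : ℝ)) volume 0 (b - a) :=
    intervalIntegral.intervalIntegrable_rpow' (by norm_num)
  constructor
  · have h := base.comp_sub_right a
    rw [zero_add, sub_add_cancel] at h
    have e : (fun x : ℝ => 1 / Real.sqrt (x - a)) = fun x : ℝ => (x - a) ^ (-(1/2) : ℝ) :=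
      funext fun x => one_div_sqrt_eq' _
    rw [e]; exact h
  · have h := (base.comp_sub_left b).symm
    rw [sub_zero, sub_sub_cancel] at h
    have e : (fun x : ℝ => 1 / Real.sqrt (b - x)) = fun x : ℝ => (b - x) ^ (-(1/2) : ℝ) :=
      funext fun x => one_div_sqrt_eq' _
    rw [e]; exact h

private lemma wInt' (a b : ℝ) (ha : 0 ≤ a) (hab : a < b) :
    IntervalIntegrable (fun x => Real.sqrt ((x - a) / (b - x)) / x) volume a b := by
  obtain ⟨h1, h2⟩ := sqrtInt' a b
  have hg : IntervalIntegrable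
      (fun x => (1 / Real.sqrt (b - a)) * (1 / Real.sqrt (x - a) + 1 / Real.sqrt (b - x)))
      volume a b := (h1.add h2).const_mul _
  refine hg.mono_fun ?_ ?_
  · refine Measurable.aestronglyMeasurable ?_
    fun_prop
  · rw [uIoc_of_le hab.le]
    refine (ae_restrict_iff' measurableSet_Ioc).2 (Filter.Eventually.of_forall fun x hx => ?_)
    obtain ⟨hxa, hxb⟩ := hx
    have hs3 : 0 < Real.sqrt (b - a) := Real.sqrt_pos.2 (by linarith)
    have hx0 : 0 < x := lt_of_le_of_lt ha hxa
    have hwnn : 0 ≤ Real.sqrt ((x - a) / (b - x)) / x := by positivity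
    have hgnn : 0 ≤ (1 / Real.sqrt (b - a)) * (1 / Real.sqrt (x - a) + 1 / Real.sqrt (b - x)) := by
      positivity
    simp only [Real.norm_eq_abs]
    rw [abs_of_nonneg hwnn, abs_of_nonneg hgnn]
    rcases eq_or_lt_of_le hxb with rfl | hxb'
    · rw [sub_self, div_zero, Real.sqrt_zero, zero_div]
      positivity
    · have hs1 : 0 < Real.sqrt (x - a) := Real.sqrt_pos.2 (by linarith)
      have hs2 : 0 < Real.sqrt (b - x) := Real.sqrt_pos.2 (by linarith)
      have e1 : Real.sqrt (x - a) ^ 2 = x - a := Real.sq_sqrt (by linarith)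
      have e2 : Real.sqrt (b - x) ^ 2 = b - x := Real.sq_sqrt (by linarith)
      have e3 : Real.sqrt (b - a) ^ 2 = b - a := Real.sq_sqrt (by linarith)
      rw [Real.sqrt_div (by linarith : (0:ℝ) ≤ x - a)]
      have hstep1 : Real.sqrt (x - a) / Real.sqrt (b - x) / x
          ≤ 1 / (Real.sqrt (x - a) * Real.sqrt (b - x)) := by
        rw [div_div, div_le_div_iff₀ (by positivity) (by positivity)]
        nlinarith [hs1.le, hs2.le, mul_pos hs1 hs2]
      have hs3le : Real.sqrt (b - a) ≤ Real.sqrt (x - a) + Real.sqrt (b - x) := by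
        have h4 : b - a ≤ (Real.sqrt (x - a) + Real.sqrt (b - x)) ^ 2 := by
          nlinarith [mul_pos hs1 hs2]
        calc Real.sqrt (b - a) ≤ Real.sqrt ((Real.sqrt (x - a) + Real.sqrt (b - x)) ^ 2) :=
              Real.sqrt_le_sqrt h4
          _ = Real.sqrt (x - a) + Real.sqrt (b - x) := Real.sqrt_sq (by positivity)
      have hstep2 : 1 / (Real.sqrt (x - a) * Real.sqrt (b - x))
          ≤ (1 / Real.sqrt (b - a)) * (1 / Real.sqrt (x - a) + 1 / Real.sqrt (b - x)) := by
        rw [show (1 / Real.sqrt (b - a)) * (1 / Real.sqrt (x - a) + 1 / Real.sqrt (b - x))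
            = (Real.sqrt (x - a) + Real.sqrt (b - x)) /
              (Real.sqrt (b - a) * (Real.sqrt (x - a) * Real.sqrt (b - x))) by
          field_simp; ring]
        rw [div_le_div_iff₀ (by positivity) (by positivity)]
        nlinarith [mul_pos hs1 hs2, mul_pos (mul_pos hs1 hs2) hs3]
      linarith
private lemma keyInt (a b : ℝ) (ha : 0 ≤ a) (hab : a < b) :
    ∫ x in a..b, Real.sqrt ((x - a) / (b - x)) / x
      = Real.pi * (1 - Real.sqrt a / Real.sqrt b) := by
  have hb0 : 0 < b := lt_of_le_of_lt ha hab
  have hq : 0 < Real.sqrt b := Real.sqrt_pos.2 hb0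
  rcases eq_or_lt_of_le ha with ha0 | ha0
  · -- a = 0
    subst ha0
    set F : ℝ → ℝ := fun y => 2 * Real.arcsin (Real.sqrt y / Real.sqrt b) with hF
    have hcont : ContinuousOn F (Icc 0 b) :=
      (continuous_const.mul (Real.continuous_arcsin.comp
        (Real.continuous_sqrt.div_const _))).continuousOn
    have hderiv : ∀ x ∈ Ioo (0:ℝ) b, HasDerivWithinAt F
        (Real.sqrt ((x - 0) / (b - x)) / x) (Ioi x) x := by
      intro x hx
      obtain ⟨hx0, hxb⟩ := hx
      have hbx : 0 < b - x := by linarith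
      have hs4 : 0 < Real.sqrt x := Real.sqrt_pos.2 hx0
      have hs2 : 0 < Real.sqrt (b - x) := Real.sqrt_pos.2 hbx
      have e2 : Real.sqrt (b - x) ^ 2 = b - x := Real.sq_sqrt hbx.le
      have e4 : Real.sqrt x ^ 2 = x := Real.sq_sqrt hx0.le
      have eb : Real.sqrt b ^ 2 = b := Real.sq_sqrt hb0.le
      have hvlt : Real.sqrt x / Real.sqrt b < 1 := by
        rw [div_lt_one hq]
        exact Real.sqrt_lt_sqrt hx0.le hxb
      have hvnn : (0:ℝ) ≤ Real.sqrt x / Real.sqrt b := by positivity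
      have d1 : HasDerivAt (fun y : ℝ => Real.sqrt y / Real.sqrt b)
          (1 / (2 * Real.sqrt x) / Real.sqrt b) x :=
        (Real.hasDerivAt_sqrt hx0.ne').div_const _
      have harc := (Real.hasDerivAt_arcsin
        (by intro h; rw [h] at hvnn; norm_num at hvnn) hvlt.ne).comp x d1
      have t1 := harc.const_mul 2
      have hD : 2 * (1 / Real.sqrt (1 - (Real.sqrt x / Real.sqrt b) ^ 2) *
          (1 / (2 * Real.sqrt x) / Real.sqrt b)) = Real.sqrt ((x - 0) / (b - x)) / x := by
        have hA : Real.sqrt (1 - (Real.sqrt x / Real.sqrt b) ^ 2)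
            = Real.sqrt (b - x) / Real.sqrt b := by
          rw [show 1 - (Real.sqrt x / Real.sqrt b) ^ 2
              = (Real.sqrt (b - x) / Real.sqrt b) ^ 2 by
            rw [div_pow, div_pow, e2, e4, eb]; field_simp]
          exact Real.sqrt_sq (by positivity)
        rw [hA, sub_zero, Real.sqrt_div hx0.le]
        set z := Real.sqrt x with hz
        set v := Real.sqrt (b - x) with hv
        rw [← e4]
        field_simp
      exact (hD ▸ t1 : HasDerivAt F _ x).hasDerivWithinAt
    have := intervalIntegral.integral_eq_sub_of_hasDeriv_right_of_le hab.le hcont hderiv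
      (wInt' 0 b le_rfl hab)
    rw [this, hF]
    simp [Real.arcsin_one, div_self hq.ne']
    ring
  · -- 0 < a
    have hxa0 : (0:ℝ) < b - a := by linarith
    have hs3 : 0 < Real.sqrt (b - a) := Real.sqrt_pos.2 hxa0
    have hp : 0 < Real.sqrt a := Real.sqrt_pos.2 ha0
    set F : ℝ → ℝ := fun y => 2 * Real.arcsin (Real.sqrt (y - a) / Real.sqrt (b - a))
        - 2 * (Real.sqrt a / Real.sqrt b) *
          Real.arcsin (Real.sqrt b * Real.sqrt (y - a) / (Real.sqrt y * Real.sqrt (b - a)))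
      with hF
    have hFa : F a = 0 := by simp [hF]
    have hFb : F b = Real.pi * (1 - Real.sqrt a / Real.sqrt b) := by
      rw [hF]
      simp only
      rw [div_self hs3.ne', mul_comm (Real.sqrt b) (Real.sqrt (b - a)),
        div_self (by positivity : Real.sqrt (b - a) * Real.sqrt b ≠ 0), Real.arcsin_one]
      ring
    have hcont : ContinuousOn F (Icc a b) := by
      rw [hF]
      refine ContinuousOn.sub ?_ ?_
      · exact (continuous_const.mul (Real.continuous_arcsin.comp
          ((Real.continuous_sqrt.comp (continuous_id.sub continuous_const)).div_const
            _))).continuousOn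
      · refine continuousOn_const.mul (Real.continuous_arcsin.comp_continuousOn ?_)
        refine ContinuousOn.div ?_ ?_ ?_
        · exact (continuous_const.mul
            (Real.continuous_sqrt.comp (continuous_id.sub continuous_const))).continuousOn
        · exact (Real.continuous_sqrt.mul continuous_const).continuousOn
        · intro y hy
          have : 0 < Real.sqrt y := Real.sqrt_pos.2 (lt_of_lt_of_le ha0 hy.1)
          positivity
    have hderiv : ∀ x ∈ Ioo a b, HasDerivWithinAt F
        (Real.sqrt ((x - a) / (b - x)) / x) (Ioi x) x := by
      intro x hx
      obtain ⟨hx1, hx2⟩ := hx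
      have hx0 : 0 < x := lt_trans ha0 hx1
      have hxa : 0 < x - a := by linarith
      have hbx : 0 < b - x := by linarith
      have hs1 : 0 < Real.sqrt (x - a) := Real.sqrt_pos.2 hxa
      have hs2 : 0 < Real.sqrt (b - x) := Real.sqrt_pos.2 hbx
      have hs4 : 0 < Real.sqrt x := Real.sqrt_pos.2 hx0
      have e1 : Real.sqrt (x - a) ^ 2 = x - a := Real.sq_sqrt hxa.le
      have e2 : Real.sqrt (b - x) ^ 2 = b - x := Real.sq_sqrt hbx.le
      have e3 : Real.sqrt (b - a) ^ 2 = b - a := Real.sq_sqrt hxa0.le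
      have e4 : Real.sqrt x ^ 2 = x := Real.sq_sqrt hx0.le
      have ep : Real.sqrt a ^ 2 = a := Real.sq_sqrt ha0.le
      have eb : Real.sqrt b ^ 2 = b := Real.sq_sqrt hb0.le
      -- first term
      have d1 : HasDerivAt (fun y : ℝ => Real.sqrt (y - a))
          (1 / (2 * Real.sqrt (x - a))) x := by
        simpa using ((hasDerivAt_id x).sub_const a).sqrt hxa.ne'
      have darg1 := d1.div_const (Real.sqrt (b - a))
      have hv1nn : (0:ℝ) ≤ Real.sqrt (x - a) / Real.sqrt (b - a) := by positivity
      have hv1lt : Real.sqrt (x - a) / Real.sqrt (b - a) < 1 := by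
        rw [div_lt_one hs3]
        exact Real.sqrt_lt_sqrt hxa.le (by linarith)
      have harc1 := (Real.hasDerivAt_arcsin
        (by intro h; rw [h] at hv1nn; norm_num at hv1nn) hv1lt.ne).comp x darg1
      have t1 := harc1.const_mul 2
      -- second term
      have dnum : HasDerivAt (fun y : ℝ => Real.sqrt b * Real.sqrt (y - a))
          (Real.sqrt b * (1 / (2 * Real.sqrt (x - a)))) x := d1.const_mul _
      have dden : HasDerivAt (fun y : ℝ => Real.sqrt y * Real.sqrt (b - a))
          (1 / (2 * Real.sqrt x) * Real.sqrt (b - a)) x :=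
        (Real.hasDerivAt_sqrt hx0.ne').mul_const _
      have hdenne : Real.sqrt x * Real.sqrt (b - a) ≠ 0 := by positivity
      have dg := dnum.div dden hdenne
      have hv2nn : (0:ℝ) ≤ Real.sqrt b * Real.sqrt (x - a)
          / (Real.sqrt x * Real.sqrt (b - a)) := by positivity
      have hv2lt : Real.sqrt b * Real.sqrt (x - a)
          / (Real.sqrt x * Real.sqrt (b - a)) < 1 := by
        rw [div_lt_one (by positivity)]
        refine lt_of_pow_lt_pow_left₀ 2 (by positivity) ?_
        rw [mul_pow, mul_pow, e1, e3, e4, eb]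
        nlinarith
      have harc2 := (Real.hasDerivAt_arcsin
        (by intro h; rw [h] at hv2nn; norm_num at hv2nn) hv2lt.ne).comp x dg
      have t2 := harc2.const_mul (2 * (Real.sqrt a / Real.sqrt b))
      have hsum := t1.sub t2
      have hD : 2 * (1 / Real.sqrt (1 - (Real.sqrt (x - a) / Real.sqrt (b - a)) ^ 2) *
            (1 / (2 * Real.sqrt (x - a)) / Real.sqrt (b - a)))
          - 2 * (Real.sqrt a / Real.sqrt b) *
            (1 / Real.sqrt (1 - (Real.sqrt b * Real.sqrt (x - a)
                / (Real.sqrt x * Real.sqrt (b - a))) ^ 2) *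
              ((Real.sqrt b * (1 / (2 * Real.sqrt (x - a))) * (Real.sqrt x * Real.sqrt (b - a))
                - Real.sqrt b * Real.sqrt (x - a)
                  * (1 / (2 * Real.sqrt x) * Real.sqrt (b - a)))
                / (Real.sqrt x * Real.sqrt (b - a)) ^ 2))
          = Real.sqrt ((x - a) / (b - x)) / x := by
        have hA : Real.sqrt (1 - (Real.sqrt (x - a) / Real.sqrt (b - a)) ^ 2)
            = Real.sqrt (b - x) / Real.sqrt (b - a) := by
          rw [show 1 - (Real.sqrt (x - a) / Real.sqrt (b - a)) ^ 2
              = (Real.sqrt (b - x) / Real.sqrt (b - a)) ^ 2 by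
            rw [div_pow, div_pow, e1, e2, e3]; field_simp; ring]
          exact Real.sqrt_sq (by positivity)
        have hB : Real.sqrt (1 - (Real.sqrt b * Real.sqrt (x - a)
              / (Real.sqrt x * Real.sqrt (b - a))) ^ 2)
            = Real.sqrt a * Real.sqrt (b - x) / (Real.sqrt x * Real.sqrt (b - a)) := by
          rw [show 1 - (Real.sqrt b * Real.sqrt (x - a)
                / (Real.sqrt x * Real.sqrt (b - a))) ^ 2
              = (Real.sqrt a * Real.sqrt (b - x) / (Real.sqrt x * Real.sqrt (b - a))) ^ 2 by
            rw [div_pow, div_pow, mul_pow, mul_pow, mul_pow, e1, e2, e3, e4, ep, eb]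
            field_simp; ring]
          exact Real.sqrt_sq (by positivity)
        rw [hA, hB, Real.sqrt_div hxa.le]
        set u := Real.sqrt (x - a) with hu
        set v := Real.sqrt (b - x) with hv
        set z := Real.sqrt x with hz
        rw [← e4]
        field_simp
        ring
      rw [hF]
      exact (hD ▸ hsum : HasDerivAt _ _ x).hasDerivWithinAt
    have := intervalIntegral.integral_eq_sub_of_hasDeriv_right_of_le hab.le hcont hderiv
      (wInt' a b ha hab)
    rw [this, hFa, hFb, sub_zero]
private lemma mpInt (a b : ℝ) (ha : 0 ≤ a) (hab : a < b) (hsq : Real.sqrt a < Real.sqrt b) :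
    ∫ x, 1 / (b - x) ∂(mpMeasure a b)
      = 2 / (Real.pi * (Real.sqrt b - Real.sqrt a) ^ 2)
        * (Real.pi * (1 - Real.sqrt a / Real.sqrt b)) := by
  set ρ : ℝ → ℝ := fun x =>
    if x ∈ Set.Ioo a b then
      2 * Real.sqrt ((b - x) * (x - a)) / (Real.pi * (Real.sqrt b - Real.sqrt a) ^ 2 * x)
    else 0 with hρ
  have hc : (0:ℝ) < (Real.sqrt b - Real.sqrt a) ^ 2 := pow_pos (sub_pos.2 hsq) 2
  have hρnn : ∀ x, 0 ≤ ρ x := by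
    intro x
    rw [hρ]
    dsimp only
    split_ifs with h
    · have hx0 : 0 < x := lt_of_le_of_lt ha h.1
      have hπ : 0 < Real.pi := Real.pi_pos
      positivity
    · exact le_refl 0
  have hρm : Measurable ρ := by
    refine Measurable.ite measurableSet_Ioo ?_ measurable_const
    fun_prop
  have hmeas : mpMeasure a b = volume.withDensity (fun x => ((ρ x).toNNReal : ENNReal)) := rfl
  rw [hmeas, integral_withDensity_eq_integral_smul (f := fun x => (ρ x).toNNReal) hρm.real_toNNReal]
  have step1 : (fun x => (ρ x).toNNReal • (1 / (b - x)))
      = fun x => Set.indicator (Set.Ioo a b)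
          (fun x => (2 / (Real.pi * (Real.sqrt b - Real.sqrt a) ^ 2))
            * (Real.sqrt ((x - a) / (b - x)) / x)) x := by
    funext x
    rw [NNReal.smul_def, Real.coe_toNNReal _ (hρnn x), hρ]
    dsimp only
    rw [Set.indicator_apply]
    split_ifs with h
    · obtain ⟨hx1, hx2⟩ := h
      have hx0 : 0 < x := lt_of_le_of_lt ha hx1
      have hbx : 0 < b - x := by linarith
      have hxa : 0 < x - a := by linarith
      have hπ : 0 < Real.pi := Real.pi_pos
      rw [Real.sqrt_mul hbx.le, Real.sqrt_div hxa.le]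
      have hs2 : 0 < Real.sqrt (b - x) := Real.sqrt_pos.2 hbx
      have e2 : Real.sqrt (b - x) ^ 2 = b - x := Real.sq_sqrt hbx.le
      set v := Real.sqrt (b - x) with hv
      rw [← e2]
      have hv0 : v ≠ 0 := hs2.ne'
      have hc0 : (Real.sqrt b - Real.sqrt a) ^ 2 ≠ 0 := hc.ne'
      rw [smul_eq_mul]
      field_simp
    · simp
  rw [step1, integral_indicator measurableSet_Ioo, ← integral_Ioc_eq_integral_Ioo,
    ← intervalIntegral.integral_of_le hab.le, intervalIntegral.integral_const_mul,
    keyInt a b ha hab]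

theorem stmt_19 (r₁ r₂ : ℝ) (hr₂ : 0 < r₂) (hr : r₂ ≤ r₁) (hsum : r₁ + r₂ = 1)
    (dm dp : ℝ)
    (hdm : dm = (Real.sqrt r₁ - Real.sqrt r₂) ^ 2 / r₁)
    (hdp : dp = (Real.sqrt r₁ + Real.sqrt r₂) ^ 2 / r₁)
    (α s : ℝ)
    (hα : α = (r₁ - r₂) / (2 * r₂))
    (hs : s = r₁ / (Real.sqrt r₂ * (Real.sqrt r₁ + Real.sqrt r₂))) :
    (∫ x, 1 / (dp - x) ∂(mpMeasure dm dp)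
        = r₁ / (Real.sqrt r₂ * (Real.sqrt r₁ + Real.sqrt r₂))) ∧
    dp * s ^ 2 + 2 * α * s = (r₁ / r₂) ^ ((3:ℝ)/2) ∧
    Real.sqrt (dp * s ^ 2 + 2 * α * s) = (r₁ / r₂) ^ ((3:ℝ)/4) ∧
    (Real.sqrt r₂ / r₁) * Real.sqrt (dp * s ^ 2 + 2 * α * s) = (r₁ * r₂) ^ (-(1:ℝ)/4) := by
  have hr₁ : 0 < r₁ := lt_of_lt_of_le hr₂ hr
  set p := Real.sqrt r₁ with hpd
  set q := Real.sqrt r₂ with hqd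
  have hp0 : 0 < p := Real.sqrt_pos.2 hr₁
  have hq0 : 0 < q := Real.sqrt_pos.2 hr₂
  have hp2 : p ^ 2 = r₁ := Real.sq_sqrt hr₁.le
  have hq2 : q ^ 2 = r₂ := Real.sq_sqrt hr₂.le
  have hqp : q ≤ p := Real.sqrt_le_sqrt hr
  have hπ : 0 < Real.pi := Real.pi_pos
  have ha : 0 ≤ dm := by rw [hdm]; positivity
  have hab : dm < dp := by
    rw [hdm, hdp, div_lt_div_iff₀ hr₁ hr₁]
    nlinarith
  have hsa : Real.sqrt dm = (p - q) / p := by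
    rw [hdm, show (p - q) ^ 2 / r₁ = ((p - q) / p) ^ 2 by rw [div_pow, hp2]]
    exact Real.sqrt_sq (div_nonneg (by linarith) hp0.le)
  have hsb : Real.sqrt dp = (p + q) / p := by
    rw [hdp, show (p + q) ^ 2 / r₁ = ((p + q) / p) ^ 2 by rw [div_pow, hp2]]
    exact Real.sqrt_sq (div_nonneg (by linarith) hp0.le)
  have hsq : Real.sqrt dm < Real.sqrt dp := by
    rw [hsa, hsb, div_lt_div_iff₀ hp0 hp0]
    nlinarith
  -- part (i)
  have part1 : ∫ x, 1 / (dp - x) ∂(mpMeasure dm dp)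
      = r₁ / (q * (p + q)) := by
    rw [mpInt dm dp ha hab hsq, hsa, hsb, ← hp2]
    have hpq0 : (0:ℝ) < p + q := by linarith
    have hq0' : q ≠ 0 := hq0.ne'
    field_simp
    rw [show p + q - (p - q) = 2 * q by ring, div_self (by positivity)]
  -- part (ii)
  have part2 : dp * s ^ 2 + 2 * α * s = (r₁ / r₂) ^ ((3:ℝ)/2) := by
    have hrpow : (r₁ / r₂) ^ ((3:ℝ)/2) = (p/q)^3 := by
      have h1 : r₁ / r₂ = (p/q) ^ (2:ℕ) := by rw [← hp2, ← hq2]; ring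
      rw [h1, ← Real.rpow_natCast (p/q) 2, ← Real.rpow_mul (by positivity)]
      norm_num
    rw [hrpow, hdp, hα, hs, ← hp2, ← hq2]
    have hpq : 0 < p + q := by positivity
    field_simp
    ring
  -- part (iii)
  have ht : (0:ℝ) ≤ r₁ / r₂ := by positivity
  have part3 : Real.sqrt (dp * s ^ 2 + 2 * α * s) = (r₁ / r₂) ^ ((3:ℝ)/4) := by
    rw [part2, Real.sqrt_eq_rpow, ← Real.rpow_mul ht]
    norm_num
  -- part (iv)
  have part4 : (q / r₁) * Real.sqrt (dp * s ^ 2 + 2 * α * s) = (r₁ * r₂) ^ (-(1:ℝ)/4) := by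
    rw [part2]
    have hL : 0 ≤ (q / r₁) * Real.sqrt ((r₁ / r₂) ^ ((3:ℝ)/2)) := by positivity
    have hR : (0:ℝ) ≤ (r₁ * r₂) ^ (-(1:ℝ)/4) := by positivity
    refine (pow_left_inj₀ hL hR (n := 4) (by norm_num)).1 ?_
    have h1 : (Real.sqrt ((r₁ / r₂) ^ ((3:ℝ)/2))) ^ 2 = (r₁ / r₂) ^ ((3:ℝ)/2) :=
      Real.sq_sqrt (by positivity)
    have h2 : ((r₁ / r₂) ^ ((3:ℝ)/2)) ^ 2 = (r₁/r₂)^(3:ℕ) := by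
      rw [← Real.rpow_natCast ((r₁ / r₂) ^ ((3:ℝ)/2)) 2, ← Real.rpow_mul ht]
      norm_num
    have h3 : ((r₁ * r₂) ^ (-(1:ℝ)/4)) ^ 4 = (r₁ * r₂)⁻¹ := by
      rw [← Real.rpow_natCast ((r₁ * r₂) ^ (-(1:ℝ)/4)) 4, ← Real.rpow_mul (by positivity)]
      norm_num
      rw [Real.rpow_neg_one, mul_inv]
      ring
    calc ((q / r₁) * Real.sqrt ((r₁ / r₂) ^ ((3:ℝ)/2))) ^ 4
        = (q ^ 2)^2 / r₁ ^ 4 * ((Real.sqrt ((r₁ / r₂) ^ ((3:ℝ)/2))) ^ 2) ^ 2 := by ring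
      _ = r₂^2 / r₁ ^ 4 * (r₁/r₂)^(3:ℕ) := by rw [hq2, h1, h2]
      _ = (r₁ * r₂)⁻¹ := by field_simp
      _ = ((r₁ * r₂) ^ (-(1:ℝ)/4)) ^ 4 := h3.symm
  exact ⟨part1, part2, part3, part4⟩
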